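/- arXiv:0806.2068 — 7 statements merged into one kernel-verified Lean document; each statement's English description precedes it below -/
import Mathlib

section
/- Let d, n be positive integers such that φ(m) > d for every integer m > n. If M is a d×d matrix over ℚ that is torsion (i.e., M^p = M^q for some distinct naturals p, q), then the minimal polynomial of M divides z^d · ∏_{j=1}^n γ_j(z), where γ_j denotes the j-th cyclotomic polynomial. -/
open Polynomial

theorem minpoly_dvd_of_torsion (d n : ℕ) (hd : 0 < d) (hn : 0 < n)
    (hphi : ∀ m : ℕ, n < m → d < Nat.totient m)
    (M : Matrix (Fin d) (Fin d) ℚ)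
    (htor : ∃ p q : ℕ, p ≠ q ∧ M ^ p = M ^ q) :
    minpoly ℚ M ∣
      Polynomial.X ^ d * ∏ j ∈ Finset.Icc 1 n, Polynomial.cyclotomic j ℚ := by
  obtain ⟨p, q, hpq, hM⟩ := htor
  wlog hlt : p < q generalizing p q
  · exact this q p hpq.symm hM.symm (by omega)
  set m := minpoly ℚ M with hmdef
  set k := q - p with hk
  have hk0 : 0 < k := by omega
  have hint : IsIntegral ℚ M := ⟨M.charpoly, M.charpoly_monic, M.aeval_self_charpoly⟩
  have hm0 : m ≠ 0 := minpoly.ne_zero hint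
  have hdegm : m.natDegree ≤ d := by
    have h1 : m ∣ M.charpoly := M.minpoly_dvd_charpoly
    have h2 : M.charpoly ≠ 0 := M.charpoly_monic.ne_zero
    have := Polynomial.natDegree_le_of_dvd h1 h2
    rwa [Matrix.charpoly_natDegree_eq_dim, Fintype.card_fin] at this
  -- minpoly divides X^p * (X^k - 1)
  have hdvd : m ∣ X ^ p * (X ^ k - 1) := by
    apply minpoly.dvd
    have : M ^ p * (M ^ k - 1) = 0 := by
      rw [mul_sub, mul_one, ← pow_add]
      have hpk : p + k = q := by omega
      rw [hpk, ← hM, sub_self]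
    simpa using this
  -- extract the power of X
  obtain ⟨g, hg, hXg⟩ := m.exists_eq_pow_rootMultiplicity_mul_and_not_dvd hm0 0
  rw [map_zero, sub_zero] at hg hXg
  set a := m.rootMultiplicity 0 with ha
  have hg0 : g ≠ 0 := by rintro rfl; simp at hg; exact hm0 hg
  have hgm : g ∣ m := ⟨X ^ a, by rw [hg, mul_comm]⟩
  have hXa : (X : ℚ[X]) ^ a ∣ m := ⟨g, hg⟩
  have hale : a ≤ d := by
    have := Polynomial.natDegree_le_of_dvd hXa hm0
    simpa using this.trans hdegm
  -- g divides X^k - 1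
  have hgcop : IsCoprime ((X : ℚ[X]) ^ p) g :=
    IsCoprime.pow_left ((Polynomial.irreducible_X.coprime_iff_not_dvd).mpr hXg)
  have hgdvd : g ∣ X ^ k - 1 := by
    have : g ∣ X ^ p * (X ^ k - 1) := hgm.trans hdvd
    exact (hgcop.symm).dvd_of_dvd_mul_left this
  rw [← Polynomial.prod_cyclotomic_eq_X_pow_sub_one hk0 ℚ] at hgdvd
  -- split divisors of k into small (≤ n) and large (> n)
  have hsplit : ∏ i ∈ k.divisors, cyclotomic i ℚ =
      (∏ i ∈ k.divisors.filter (· ≤ n), cyclotomic i ℚ) *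
      ∏ i ∈ k.divisors.filter (¬ · ≤ n), cyclotomic i ℚ :=
    (Finset.prod_filter_mul_prod_filter_not _ _ _).symm
  rw [hsplit] at hgdvd
  have hcopbig : IsCoprime g (∏ i ∈ k.divisors.filter (¬ · ≤ n), cyclotomic i ℚ) := by
    apply IsCoprime.prod_right
    intro i hi
    obtain ⟨hidvd, hin⟩ := Finset.mem_filter.mp hi
    have hipos : 0 < i := Nat.pos_of_mem_divisors hidvd
    have hirr : Irreducible (cyclotomic i ℚ) := cyclotomic.irreducible_rat hipos
    rw [isCoprime_comm]
    apply (hirr.coprime_iff_not_dvd).mpr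
    intro hdvd'
    have hdeg' : (cyclotomic i ℚ).natDegree ≤ g.natDegree :=
      Polynomial.natDegree_le_of_dvd hdvd' hg0
    rw [Polynomial.natDegree_cyclotomic] at hdeg'
    have hgdeg : g.natDegree ≤ m.natDegree := Polynomial.natDegree_le_of_dvd hgm hm0
    have : d < i.totient := hphi i (by omega)
    omega
  have hgsmall : g ∣ ∏ i ∈ k.divisors.filter (· ≤ n), cyclotomic i ℚ :=
    hcopbig.dvd_of_dvd_mul_right hgdvd
  have hsub : k.divisors.filter (· ≤ n) ⊆ Finset.Icc 1 n := by
    intro i hi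
    obtain ⟨hidvd, hin⟩ := Finset.mem_filter.mp hi
    exact Finset.mem_Icc.mpr ⟨Nat.pos_of_mem_divisors hidvd, hin⟩
  have hprodsub : (∏ i ∈ k.divisors.filter (· ≤ n), cyclotomic i ℚ) ∣
      ∏ j ∈ Finset.Icc 1 n, cyclotomic j ℚ :=
    Finset.prod_dvd_prod_of_subset _ _ _ hsub
  calc m = X ^ a * g := hg
    _ ∣ X ^ d * ∏ j ∈ Finset.Icc 1 n, cyclotomic j ℚ :=
      mul_dvd_mul (pow_dvd_pow X hale) (hgsmall.trans hprodsub)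
end

section
/- Let d, n be positive integers such that φ(m) > d for all m > n. A d×d matrix M over ℚ is torsion (M^p = M^q for some distinct naturals p, q) if and only if M annihilates the polynomial z^d · ∏_{j=1}^n γ_j(z). -/
open Polynomial

theorem torsion_iff_annihilates (d n : ℕ) (hd : 0 < d) (hn : 0 < n)
    (hphi : ∀ m : ℕ, n < m → d < Nat.totient m)
    (M : Matrix (Fin d) (Fin d) ℚ) :
    (∃ p q : ℕ, p ≠ q ∧ M ^ p = M ^ q) ↔
      Polynomial.aeval M
        (Polynomial.X ^ d * ∏ j ∈ Finset.Icc 1 n, Polynomial.cyclotomic j ℚ) = 0 := by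
  haveI : Nonempty (Fin d) := ⟨⟨0, hd⟩⟩
  constructor
  · rintro ⟨p, q, hpq, hM⟩
    wlog hlt : p < q generalizing p q
    · exact this q p hpq.symm hM.symm (by omega)
    set k := q - p with hk
    have hk0 : 0 < k := by omega
    set μ := minpoly ℚ M with hμdef
    have hint : IsIntegral ℚ M := Matrix.isIntegral M
    have hμ0 : μ ≠ 0 := minpoly.ne_zero hint
    have hμd : μ.natDegree ≤ d := by
      calc μ.natDegree ≤ (Matrix.charpoly M).natDegree :=
            Polynomial.natDegree_le_of_dvd (Matrix.minpoly_dvd_charpoly M)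
              (Matrix.charpoly_monic M).ne_zero
        _ = d := by simpa using Matrix.charpoly_natDegree_eq_dim M
    have hdvd : μ ∣ X ^ p * (X ^ k - 1) := by
      apply minpoly.dvd
      rw [map_mul, map_sub, map_pow, map_pow, map_one, aeval_X, mul_sub, mul_one, ← pow_add]
      have hpk : p + k = q := by omega
      rw [hpk, ← hM, sub_self]
    obtain ⟨a, b, ha, hb, hab⟩ := exists_dvd_and_dvd_of_dvd_mul hdvd
    have ha0 : a ≠ 0 := fun h => hμ0 (by simp [hab, h])
    have hb0 : b ≠ 0 := fun h => hμ0 (by simp [hab, h])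
    have had : a.natDegree ≤ d :=
      le_trans (Polynomial.natDegree_le_of_dvd ⟨b, hab⟩ hμ0) hμd
    have hbd : b.natDegree ≤ d :=
      le_trans (Polynomial.natDegree_le_of_dvd ⟨a, by rw [hab, mul_comm]⟩ hμ0) hμd
    -- a divides X^d
    obtain ⟨i, hip, hia⟩ := (dvd_prime_pow Polynomial.prime_X p).mp ha
    have hid : i ≤ d := by
      have h1 : (X : ℚ[X]) ^ i ∣ a := hia.symm.dvd
      have h2 := Polynomial.natDegree_le_of_dvd h1 ha0
      rw [Polynomial.natDegree_X_pow] at h2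
      omega
    have haXd : a ∣ X ^ d := hia.dvd.trans (pow_dvd_pow _ hid)
    -- b divides the cyclotomic product
    have hXk : (X : ℚ[X]) ^ k - 1 = ∏ j ∈ k.divisors, cyclotomic j ℚ :=
      (Polynomial.prod_cyclotomic_eq_X_pow_sub_one hk0 ℚ).symm
    rw [hXk, ← Finset.prod_filter_mul_prod_filter_not k.divisors (· ≤ n)] at hb
    have hcop : IsCoprime b
        (∏ j ∈ k.divisors.filter (fun j => ¬ j ≤ n), cyclotomic j ℚ) := by
      apply IsCoprime.prod_right
      intro j hj
      simp only [Finset.mem_filter, Nat.mem_divisors] at hj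
      have hjn : n < j := by omega
      have hirr : Irreducible (cyclotomic j ℚ) := cyclotomic.irreducible_rat (by omega)
      rw [isCoprime_comm, hirr.coprime_iff_not_dvd]
      intro hdvd'
      have h3 := Polynomial.natDegree_le_of_dvd hdvd' hb0
      rw [Polynomial.natDegree_cyclotomic] at h3
      have := hphi j hjn
      omega
    have hb' : b ∣ ∏ j ∈ k.divisors.filter (· ≤ n), cyclotomic j ℚ :=
      hcop.dvd_of_dvd_mul_right hb
    have hsub : k.divisors.filter (· ≤ n) ⊆ Finset.Icc 1 n := by
      intro j hj
      simp only [Finset.mem_filter, Nat.mem_divisors, Finset.mem_Icc] at hj ⊢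
      exact ⟨Nat.pos_of_dvd_of_pos hj.1.1 hk0, hj.2⟩
    have hbfin : b ∣ ∏ j ∈ Finset.Icc 1 n, cyclotomic j ℚ :=
      hb'.trans (Finset.prod_dvd_prod_of_subset _ _ _ hsub)
    obtain ⟨c, hc⟩ : μ ∣ X ^ d * ∏ j ∈ Finset.Icc 1 n, cyclotomic j ℚ := by
      rw [hab]; exact mul_dvd_mul haXd hbfin
    rw [hc, map_mul, minpoly.aeval, zero_mul]
  · intro h
    set L := n.factorial with hL
    have hL0 : 0 < L := n.factorial_pos
    refine ⟨d + L, d, by omega, ?_⟩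
    have hsub : Finset.Icc 1 n ⊆ L.divisors := by
      intro j hj
      simp only [Finset.mem_Icc] at hj
      exact Nat.mem_divisors.mpr ⟨Nat.dvd_factorial hj.1 hj.2, hL0.ne'⟩
    have hprod : (∏ j ∈ Finset.Icc 1 n, cyclotomic j ℚ) ∣ (X : ℚ[X]) ^ L - 1 := by
      rw [← Polynomial.prod_cyclotomic_eq_X_pow_sub_one hL0 ℚ]
      exact Finset.prod_dvd_prod_of_subset _ _ _ hsub
    have hdvd : (X : ℚ[X]) ^ d * ∏ j ∈ Finset.Icc 1 n, cyclotomic j ℚ ∣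
        X ^ (d + L) - X ^ d := by
      have : (X : ℚ[X]) ^ (d + L) - X ^ d = X ^ d * ((X : ℚ[X]) ^ L - 1) := by
        ring
      rw [this]
      exact mul_dvd_mul_left _ hprod
    obtain ⟨c, hc⟩ := hdvd
    have h2 : Polynomial.aeval M ((X : ℚ[X]) ^ (d + L) - X ^ d) = 0 := by
      rw [hc, map_mul, h, zero_mul]
    rw [map_sub, map_pow, map_pow, aeval_X] at h2
    exact sub_eq_zero.mp h2
end

section
/- Let d, n be positive integers such that φ(m) > d for all m > n. If a d×d matrix M over ℚ is torsion, then M^(n! + d) = M^d. -/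
open Polynomial

lemma torsion_pow_factorial_aux (d n : ℕ) (hd : 0 < d) (hn : 0 < n)
    (hphi : ∀ m : ℕ, n < m → d < Nat.totient m)
    (M : Matrix (Fin d) (Fin d) ℚ)
    (p q : ℕ) (hpq : p < q) (heq : M ^ p = M ^ q) :
    M ^ (Nat.factorial n + d) = M ^ d := by
  have : Fact (0 < d) := ⟨hd⟩
  set μ := minpoly ℚ M with hμdef
  have hM : IsIntegral ℚ M := Algebra.IsIntegral.isIntegral M
  have hμmonic : μ.Monic := minpoly.monic hM
  have hμ0 : μ ≠ 0 := hμmonic.ne_zero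
  have hdeg : μ.natDegree ≤ d := by
    have h1 : μ ∣ M.charpoly := minpoly.dvd _ _ (Matrix.aeval_self_charpoly M)
    have h2 := Polynomial.natDegree_le_of_dvd h1 (M.charpoly_monic.ne_zero)
    rwa [Matrix.charpoly_natDegree_eq_dim, Fintype.card_fin] at h2
  set r := q - p with hrdef
  have hr0 : 0 < r := by omega
  have hqpr : q = p + r := by omega
  have hdvd : μ ∣ (X : ℚ[X]) ^ p * (X ^ r - 1) := by
    apply minpoly.dvd
    have : (aeval M) ((X : ℚ[X]) ^ p * (X ^ r - 1)) = M ^ q - M ^ p := by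
      simp [mul_sub, ← pow_add, ← hqpr]
    rw [this, heq, sub_self]
  obtain ⟨b, c, hb, hc, hbc⟩ := exists_dvd_and_dvd_of_dvd_mul hdvd
  have hb0 : b ≠ 0 := fun h => hμ0 (by rw [hbc, h, zero_mul])
  have hc0 : c ≠ 0 := fun h => hμ0 (by rw [hbc, h, mul_zero])
  have hbμ : b ∣ μ := ⟨c, hbc⟩
  have hcμ : c ∣ μ := ⟨b, by rw [hbc, mul_comm]⟩
  have hbd : b.natDegree ≤ d := le_trans (Polynomial.natDegree_le_of_dvd hbμ hμ0) hdeg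
  have hcd : c.natDegree ≤ d := le_trans (Polynomial.natDegree_le_of_dvd hcμ hμ0) hdeg
  -- b divides X ^ d
  have hbX : b ∣ (X : ℚ[X]) ^ d := by
    obtain ⟨i, hip, hassoc⟩ := (dvd_prime_pow Polynomial.prime_X p).mp hb
    have hXib : (X : ℚ[X]) ^ i ∣ b := hassoc.symm.dvd
    have hid : i ≤ d := by
      have := Polynomial.natDegree_le_of_dvd hXib hb0
      simpa using le_trans this hbd
    exact dvd_trans hassoc.dvd (pow_dvd_pow _ hid)
  -- c divides X ^ n! - 1
  have hcX : c ∣ (X : ℚ[X]) ^ (Nat.factorial n) - 1 := by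
    have hfact : (X : ℚ[X]) ^ r - 1 = ∏ m ∈ r.divisors, cyclotomic m ℚ :=
      (prod_cyclotomic_eq_X_pow_sub_one hr0 ℚ).symm
    have hcop : IsCoprime c
        (∏ m ∈ r.divisors.filter (fun m => ¬ m ∣ Nat.factorial n), cyclotomic m ℚ) := by
      apply IsCoprime.prod_right
      intro m hm
      rw [Finset.mem_filter] at hm
      have hm0 : 0 < m := Nat.pos_of_mem_divisors hm.1
      have hmn : n < m := by
        by_contra h
        exact hm.2 (Nat.dvd_factorial hm0 (le_of_not_gt h))
      have hirr := cyclotomic.irreducible_rat hm0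
      rw [isCoprime_comm, hirr.coprime_iff_not_dvd]
      intro hdvd'
      have hle := Polynomial.natDegree_le_of_dvd hdvd' hc0
      rw [natDegree_cyclotomic] at hle
      have := hphi m hmn
      omega
    have hcS : c ∣ ∏ m ∈ r.divisors.filter (fun m => m ∣ Nat.factorial n), cyclotomic m ℚ := by
      apply hcop.dvd_of_dvd_mul_right
      rw [Finset.prod_filter_mul_prod_filter_not, ← hfact]
      exact hc
    have hSsub : r.divisors.filter (fun m => m ∣ Nat.factorial n) ⊆ (Nat.factorial n).divisors := by
      intro m hm
      rw [Finset.mem_filter] at hm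
      exact Nat.mem_divisors.mpr ⟨hm.2, Nat.factorial_ne_zero n⟩
    calc c ∣ ∏ m ∈ r.divisors.filter (fun m => m ∣ Nat.factorial n), cyclotomic m ℚ := hcS
      _ ∣ ∏ m ∈ (Nat.factorial n).divisors, cyclotomic m ℚ :=
          Finset.prod_dvd_prod_of_subset _ _ _ hSsub
      _ = X ^ (Nat.factorial n) - 1 := prod_cyclotomic_eq_X_pow_sub_one (Nat.factorial_pos n) ℚ
  have hfinal : μ ∣ (X : ℚ[X]) ^ d * (X ^ (Nat.factorial n) - 1) :=
    hbc ▸ mul_dvd_mul hbX hcX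
  obtain ⟨k, hk⟩ := hfinal
  have haev : (aeval M) ((X : ℚ[X]) ^ d * (X ^ (Nat.factorial n) - 1)) = 0 := by
    rw [hk, map_mul, minpoly.aeval, zero_mul]
  have : M ^ d * (M ^ (Nat.factorial n) - 1) = 0 := by
    simpa [mul_sub] using haev
  have h2 : M ^ d * M ^ (Nat.factorial n) = M ^ d := by
    rw [mul_sub, mul_one, sub_eq_zero] at this
    exact this
  calc M ^ (Nat.factorial n + d) = M ^ d * M ^ (Nat.factorial n) := by
        rw [← pow_add, add_comm]
    _ = M ^ d := h2

theorem torsion_pow_factorial (d n : ℕ) (hd : 0 < d) (hn : 0 < n)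
    (hphi : ∀ m : ℕ, n < m → d < Nat.totient m)
    (M : Matrix (Fin d) (Fin d) ℚ)
    (htor : ∃ p q : ℕ, p ≠ q ∧ M ^ p = M ^ q) :
    M ^ (Nat.factorial n + d) = M ^ d := by
  obtain ⟨p, q, hne, heq⟩ := htor
  rcases hne.lt_or_gt with h | h
  · exact torsion_pow_factorial_aux d n hd hn hphi M p q h heq
  · exact torsion_pow_factorial_aux d n hd hn hphi M q p h heq.symm
end

section
/- For every positive integer d, a d×d matrix M over ℚ is torsion (i.e., M^p = M^q for some distinct naturals p, q) if and only if M annihilates the polynomial z^d · ∏_{j=1}^{2d²} γ_j(z), where γ_j is the j-th cyclotomic polynomial. -/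
open Polynomial

private lemma prime_pow_le_totient_sq {p k : ℕ} (hp : p.Prime) (hp3 : 3 ≤ p) (hk : 0 < k) :
    p ^ k ≤ Nat.totient (p ^ k) ^ 2 := by
  rw [Nat.totient_prime_pow hp hk]
  have h1 : p ≤ (p - 1) ^ 2 := by
    obtain ⟨r, hr⟩ : ∃ r, p = r + 3 := ⟨p - 3, by omega⟩
    subst hr
    have : (r + 3) - 1 = r + 2 := by omega
    rw [this]; nlinarith
  have h2 : p ^ (k - 1) ≤ (p ^ (k - 1)) ^ 2 := Nat.le_self_pow two_ne_zero _
  calc p ^ k = p ^ (k - 1) * p := by rw [← pow_succ]; congr 1; omega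
    _ ≤ (p ^ (k - 1)) ^ 2 * (p - 1) ^ 2 := Nat.mul_le_mul h2 h1
    _ = (p ^ (k - 1) * (p - 1)) ^ 2 := by ring

private lemma odd_le_totient_sq : ∀ n : ℕ, Odd n → n ≤ Nat.totient n ^ 2 := by
  intro n
  induction n using Nat.strong_induction_on with
  | _ n ih =>
    intro hodd
    rcases eq_or_ne n 1 with rfl | h1
    · simp
    have hn0 : n ≠ 0 := by rintro rfl; simp [Nat.odd_iff] at hodd
    set p := n.minFac with hp
    have hpp : p.Prime := Nat.minFac_prime h1
    have hpdvd : p ∣ n := Nat.minFac_dvd n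
    have hp2 : p ≠ 2 := by
      intro h
      rw [h] at hpdvd
      rw [Nat.odd_iff] at hodd
      obtain ⟨c, hc⟩ := hpdvd
      omega
    have hp3 : 3 ≤ p := by have := hpp.two_le; omega
    set k := n.factorization p with hk
    have hk0 : 0 < k := hpp.factorization_pos_of_dvd hn0 hpdvd
    set m := n / p ^ k with hm
    have hmn : p ^ k * m = n := Nat.ordProj_mul_ordCompl_eq_self n p
    have hpm : ¬ p ∣ m := Nat.not_dvd_ordCompl hpp hn0
    have hcop : Nat.Coprime (p ^ k) m :=
      Nat.Coprime.pow_left _ ((Nat.Prime.coprime_iff_not_dvd hpp).mpr hpm)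
    have hmlt : m < n := by
      have hm0 : 0 < m := Nat.ordCompl_pos p hn0
      have h1 : 1 < p ^ k := Nat.one_lt_pow hk0.ne' (by omega)
      calc m < p ^ k * m := by nlinarith
        _ = n := hmn
    have hmdvd : m ∣ n := ⟨p ^ k, by rw [← hmn]; ring⟩
    have hmodd : Odd m := by
      rw [Nat.odd_iff] at hodd ⊢
      rcases Nat.even_or_odd m with he | ho
      · exfalso
        obtain ⟨c, hc⟩ := he
        have : 2 ∣ n := Dvd.dvd.trans ⟨c, by omega⟩ hmdvd
        omega
      · exact Nat.odd_iff.mp ho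
    have ihm := ih m hmlt hmodd
    have htot : Nat.totient n = Nat.totient (p ^ k) * Nat.totient m := by
      rw [← hmn, Nat.totient_mul hcop]
    rw [htot, ← hmn, mul_pow]
    exact Nat.mul_le_mul (prime_pow_le_totient_sq hpp hp3 hk0) ihm

private lemma le_two_mul_totient_sq {n : ℕ} (hn : 0 < n) : n ≤ 2 * Nat.totient n ^ 2 := by
  set a := n.factorization 2 with ha
  set m := n / 2 ^ a with hm
  have hmn : 2 ^ a * m = n := Nat.ordProj_mul_ordCompl_eq_self n 2
  have hpm : ¬ 2 ∣ m := Nat.not_dvd_ordCompl Nat.prime_two hn.ne'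
  have hmodd : Odd m := Nat.odd_iff.mpr (by omega)
  have hcop : Nat.Coprime (2 ^ a) m :=
    Nat.Coprime.pow_left _ ((Nat.Prime.coprime_iff_not_dvd Nat.prime_two).mpr hpm)
  have htot : Nat.totient n = Nat.totient (2 ^ a) * Nat.totient m := by
    rw [← hmn, Nat.totient_mul hcop]
  have h2 : 2 ^ a ≤ 2 * Nat.totient (2 ^ a) ^ 2 := by
    rcases Nat.eq_zero_or_pos a with ha0 | ha0
    · rw [ha0]; simp
    · rw [Nat.totient_prime_pow Nat.prime_two ha0]
      have e1 : (2 : ℕ) ^ (a - 1) * (2 - 1) = 2 ^ (a - 1) := by norm_num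
      rw [e1, ← pow_mul]
      calc (2 : ℕ) ^ a ≤ 2 ^ (2 * a - 1) := Nat.pow_le_pow_right (by norm_num) (by omega)
        _ = 2 * 2 ^ ((a - 1) * 2) := by rw [← pow_succ']; congr 1; omega
  calc n = 2 ^ a * m := hmn.symm
    _ ≤ (2 * Nat.totient (2 ^ a) ^ 2) * (Nat.totient m ^ 2) :=
        Nat.mul_le_mul h2 (odd_le_totient_sq m hmodd)
    _ = 2 * (Nat.totient (2 ^ a) * Nat.totient m) ^ 2 := by ring
    _ = 2 * Nat.totient n ^ 2 := by rw [htot]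

theorem torsion_iff_annihilates_explicit (d : ℕ) (hd : 0 < d)
    (M : Matrix (Fin d) (Fin d) ℚ) :
    (∃ p q : ℕ, p ≠ q ∧ M ^ p = M ^ q) ↔
      Polynomial.aeval M
        (Polynomial.X ^ d *
          ∏ j ∈ Finset.Icc 1 (2 * d ^ 2), Polynomial.cyclotomic j ℚ) = 0 := by
  haveI : Nonempty (Fin d) := ⟨⟨0, hd⟩⟩
  set N := 2 * d ^ 2 with hN
  constructor
  · rintro ⟨p, q, hpq, hM⟩
    wlog hlt : p < q generalizing p q
    · exact this q p hpq.symm hM.symm (by omega)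
    set n := q - p with hn
    have hn0 : 0 < n := by omega
    set μ := minpoly ℚ M with hμ
    have hμ0 : μ ≠ 0 := minpoly.ne_zero (Matrix.isIntegral M)
    have hμdeg : μ.natDegree ≤ d := by
      have h := Polynomial.natDegree_le_of_dvd (Matrix.minpoly_dvd_charpoly M)
        (Matrix.charpoly_monic M).ne_zero
      simpa [Matrix.charpoly_natDegree_eq_dim] using h
    have hμdvd : μ ∣ X ^ p * (X ^ n - 1) := by
      apply minpoly.dvd
      have e : ((X : ℚ[X]) ^ p * (X ^ n - 1)) = X ^ q - X ^ p := by
        rw [mul_sub, mul_one, ← pow_add]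
        congr 2
        omega
      rw [e]
      simp [map_sub, map_pow, hM]
    obtain ⟨A, B, hA, hB, hAB⟩ := exists_dvd_and_dvd_of_dvd_mul hμdvd
    have hAμ : A ∣ μ := ⟨B, hAB⟩
    have hBμ : B ∣ μ := ⟨A, by rw [hAB]; ring⟩
    have hA0 : A ≠ 0 := fun h => hμ0 (by rw [hAB, h, zero_mul])
    have hB0 : B ≠ 0 := fun h => hμ0 (by rw [hAB, h, mul_zero])
    -- A divides X ^ d
    have hAn : A ∣ (X : ℚ[X]) ^ d := by
      obtain ⟨i, hip, hAi⟩ := (dvd_prime_pow Polynomial.prime_X p).mp hA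
      have hi_le : i ≤ d := by
        have h1 : ((X : ℚ[X]) ^ i).natDegree ≤ A.natDegree :=
          Polynomial.natDegree_le_of_dvd hAi.symm.dvd hA0
        have h2 : A.natDegree ≤ d := le_trans (Polynomial.natDegree_le_of_dvd hAμ hμ0) hμdeg
        simpa using le_trans h1 h2
      exact hAi.dvd.trans (pow_dvd_pow X hi_le)
    -- B divides the product of small cyclotomics
    have hBdeg : B.natDegree ≤ d := le_trans (Polynomial.natDegree_le_of_dvd hBμ hμ0) hμdeg
    have hXn : (X : ℚ[X]) ^ n - 1 =
        (∏ j ∈ n.divisors.filter (fun j => j ≤ N), cyclotomic j ℚ) *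
          (∏ j ∈ n.divisors.filter (fun j => ¬ j ≤ N), cyclotomic j ℚ) := by
      rw [Finset.prod_filter_mul_prod_filter_not n.divisors (fun j => j ≤ N),
        Polynomial.prod_cyclotomic_eq_X_pow_sub_one hn0]
    obtain ⟨B₁, B₂, hB₁, hB₂, hBeq⟩ := exists_dvd_and_dvd_of_dvd_mul (hXn ▸ hB)
    have hB₂0 : B₂ ≠ 0 := fun h => hB0 (by rw [hBeq, h, mul_zero])
    have hB₂unit : IsUnit B₂ := by
      by_contra hu
      obtain ⟨f, hf_irr, hf_dvd⟩ := WfDvdMonoid.exists_irreducible_factor hu hB₂0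
      have hf_prime : Prime f := hf_irr.prime
      obtain ⟨j, hj_mem, hfj⟩ := hf_prime.exists_mem_finset_dvd (hf_dvd.trans hB₂)
      simp only [Finset.mem_filter, Nat.mem_divisors] at hj_mem
      obtain ⟨⟨hjn, -⟩, hjN⟩ := hj_mem
      have hj0 : 0 < j := Nat.pos_of_dvd_of_pos hjn hn0
      have hcyc_irr := Polynomial.cyclotomic.irreducible_rat hj0
      have hassoc : Associated f (cyclotomic j ℚ) :=
        hf_irr.associated_of_dvd hcyc_irr hfj
      have hcyc0 : cyclotomic j ℚ ≠ 0 := Polynomial.cyclotomic_ne_zero j ℚ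
      have hf0 : f ≠ 0 := hf_prime.ne_zero
      have hdegf : f.natDegree = j.totient := by
        have h1 : f.natDegree ≤ (cyclotomic j ℚ).natDegree :=
          Polynomial.natDegree_le_of_dvd hassoc.dvd hcyc0
        have h2 : (cyclotomic j ℚ).natDegree ≤ f.natDegree :=
          Polynomial.natDegree_le_of_dvd hassoc.symm.dvd hf0
        rw [← Polynomial.natDegree_cyclotomic j ℚ]
        omega
      have hfB : f ∣ B := hf_dvd.trans ⟨B₁, by rw [hBeq]; ring⟩
      have hfd : f.natDegree ≤ d := le_trans (Polynomial.natDegree_le_of_dvd hfB hB0) hBdeg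
      have htotd : j.totient ≤ d := by omega
      have hjle := le_two_mul_totient_sq hj0
      have : j.totient ^ 2 ≤ d ^ 2 := Nat.pow_le_pow_left htotd 2
      omega
    have hBG : B ∣ ∏ j ∈ n.divisors.filter (fun j => j ≤ N), cyclotomic j ℚ := by
      rw [hBeq, hB₂unit.mul_right_dvd]
      exact hB₁
    have hGP : (∏ j ∈ n.divisors.filter (fun j => j ≤ N), cyclotomic j ℚ) ∣
        ∏ j ∈ Finset.Icc 1 N, cyclotomic j ℚ := by
      apply Finset.prod_dvd_prod_of_subset
      intro j hj
      simp only [Finset.mem_filter, Nat.mem_divisors] at hj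
      have : 0 < j := Nat.pos_of_dvd_of_pos hj.1.1 hn0
      simp only [Finset.mem_Icc]
      omega
    have hfinal : μ ∣ X ^ d * ∏ j ∈ Finset.Icc 1 N, cyclotomic j ℚ := by
      rw [hAB]
      exact mul_dvd_mul hAn (hBG.trans hGP)
    obtain ⟨c, hc⟩ := hfinal
    rw [hc, map_mul, minpoly.aeval, zero_mul]
  · intro hann
    set L := Nat.factorial N with hL
    have hLpos : 0 < L := Nat.factorial_pos N
    have hdvd : ((X : ℚ[X]) ^ d * ∏ j ∈ Finset.Icc 1 N, cyclotomic j ℚ) ∣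
        (X ^ (d + L) - X ^ d) := by
      have h1 : (∏ j ∈ Finset.Icc 1 N, cyclotomic j ℚ) ∣ ((X : ℚ[X]) ^ L - 1) := by
        rw [← Polynomial.prod_cyclotomic_eq_X_pow_sub_one hLpos]
        apply Finset.prod_dvd_prod_of_subset
        intro j hj
        simp only [Finset.mem_Icc] at hj
        rw [Nat.mem_divisors]
        exact ⟨Nat.dvd_factorial (by omega) hj.2, hLpos.ne'⟩
      have e : (X : ℚ[X]) ^ (d + L) - X ^ d = X ^ d * (X ^ L - 1) := by
        rw [mul_sub, mul_one, ← pow_add]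
      rw [e]
      exact mul_dvd_mul_left _ h1
    obtain ⟨c, hc⟩ := hdvd
    refine ⟨d + L, d, by omega, ?_⟩
    have h := congrArg (Polynomial.aeval M) hc
    rw [map_mul, hann, zero_mul, map_sub, map_pow, map_pow, Polynomial.aeval_X] at h
    exact sub_eq_zero.mp h
end

section
/- For every positive integer d, every d×d torsion matrix M over ℚ satisfies M^((2d²)! + d) = M^d. -/
open Polynomial

/-- In a UFD, a squarefree element divides anything divisible by all its prime factors. -/
lemma squarefree_dvd_of_forall_prime_dvd {α : Type*} [CommMonoidWithZero α]
    [UniqueFactorizationMonoid α] [Nontrivial α] {a : α} :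
    ∀ b : α, Squarefree a → (∀ p : α, Prime p → p ∣ a → p ∣ b) → a ∣ b := by
  induction a using UniqueFactorizationMonoid.induction_on_prime with
  | h₁ => intro b hsq _; exact absurd hsq not_squarefree_zero
  | h₂ x hx => intro b _ _; exact hx.dvd
  | h₃ a p ha hp IH =>
    intro b hsq h
    obtain ⟨b', rfl⟩ := h p hp (dvd_mul_right p a)
    refine mul_dvd_mul_left p (IH b' (hsq.squarefree_of_dvd (dvd_mul_left a p)) ?_)
    intro q hq hqa
    rcases hq.dvd_mul.mp (h q hq (dvd_mul_of_dvd_right hqa p)) with hqp | hqb'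
    · exfalso
      have hassoc : Associated q p := hq.irreducible.associated_of_dvd hp.irreducible hqp
      have hpp : p * p ∣ p * a := mul_dvd_mul_left p (hassoc.symm.dvd.trans hqa)
      exact hp.not_unit (hsq p hpp)
    · exact hqb'

/-- If `φ n ≤ d` with `d, n > 0` then `n` divides `(2 d ^ 2)!`. -/
lemma dvd_factorial_of_totient_le {d n : ℕ} (hd : 0 < d) (hn : 0 < n)
    (h : n.totient ≤ d) : n ∣ Nat.factorial (2 * d ^ 2) := by
  rw [← Nat.factorization_le_iff_dvd hn.ne' (Nat.factorial_ne_zero _)]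
  intro p
  by_cases hp : p.Prime
  · set k := n.factorization p with hk
    rcases Nat.eq_zero_or_pos k with hk0 | hkpos
    · simp [hk0]
    have hpk : p ^ k ∣ n := Nat.ordProj_dvd n p
    have htot : (p ^ k).totient ∣ n.totient := Nat.totient_dvd_of_dvd hpk
    have htotle : (p ^ k).totient ≤ d :=
      le_trans (Nat.le_of_dvd (Nat.totient_pos.mpr hn) htot) h
    rw [Nat.totient_prime_pow hp hkpos] at htotle
    have hp2 : 2 ≤ p := hp.two_le
    have h1 : p ^ (k - 1) ≤ d :=
      le_trans (Nat.le_mul_of_pos_right _ (by omega)) htotle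
    have h2 : p - 1 ≤ d :=
      le_trans (Nat.le_mul_of_pos_left _ (pow_pos hp.pos _)) htotle
    have hpk_le : p ^ k ≤ 2 * d ^ 2 := by
      have hsplit : p ^ k = p ^ (k - 1) * p := by
        conv_lhs => rw [show k = (k - 1) + 1 by omega]
        rw [pow_succ]
      rw [hsplit]
      have : p ^ (k - 1) * p ≤ d * (d + 1) := Nat.mul_le_mul h1 (by omega)
      nlinarith
    have hdf : p ^ k ∣ Nat.factorial (2 * d ^ 2) :=
      Nat.dvd_factorial (pow_pos hp.pos k) hpk_le
    exact (Nat.Prime.pow_dvd_iff_le_factorization hp (Nat.factorial_ne_zero _)).mp hdf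
  · simp [Nat.factorization_eq_zero_of_not_prime _ hp]

theorem mandel_simon (d : ℕ) (hd : 0 < d) (M : Matrix (Fin d) (Fin d) ℚ)
    (htor : ∃ p q : ℕ, p ≠ q ∧ M ^ p = M ^ q) :
    M ^ (Nat.factorial (2 * d ^ 2) + d) = M ^ d := by
  obtain ⟨p, q, hpq, hM⟩ := htor
  wlog hlt : p < q generalizing p q
  · exact this q p hpq.symm hM.symm (by omega)
  set L := Nat.factorial (2 * d ^ 2) with hL
  set e := q - p with he
  have he0 : 0 < e := by omega
  have hMe : M ^ (p + e) = M ^ p := by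
    rw [show p + e = q by omega]; exact hM.symm
  have hint : IsIntegral ℚ M := ⟨M.charpoly, M.charpoly_monic, M.aeval_self_charpoly⟩
  set μ := minpoly ℚ M with hμ
  have hμ0 : μ ≠ 0 := minpoly.ne_zero hint
  have hμdeg : μ.natDegree ≤ d := by
    have hdvd : μ ∣ M.charpoly := minpoly.dvd ℚ M M.aeval_self_charpoly
    have hle := Polynomial.natDegree_le_of_dvd hdvd M.charpoly_monic.ne_zero
    rwa [Matrix.charpoly_natDegree_eq_dim, Fintype.card_fin] at hle
  have hdvd1 : μ ∣ (X : ℚ[X]) ^ p * (X ^ e - 1) := by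
    have heq : (X : ℚ[X]) ^ p * (X ^ e - 1) = X ^ (p + e) - X ^ p := by
      rw [mul_sub, mul_one, ← pow_add]
    rw [heq]
    apply minpoly.dvd
    rw [map_sub, aeval_X_pow, aeval_X_pow, hMe, sub_self]
  obtain ⟨μ₁, μ₂, h₁, h₂, hμeq⟩ := exists_dvd_and_dvd_of_dvd_mul hdvd1
  -- μ₁ divides X ^ d
  have hμ₁ : μ₁ ∣ (X : ℚ[X]) ^ d := by
    obtain ⟨i, hi, hassoc⟩ := (dvd_prime_pow Polynomial.prime_X p).mp h₁
    have hμ₁dvdμ : μ₁ ∣ μ := hμeq ▸ dvd_mul_right μ₁ μ₂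
    have hideg : i ≤ d := by
      have hXdvd : (X : ℚ[X]) ^ i ∣ μ := hassoc.symm.dvd.trans hμ₁dvdμ
      have hle := Polynomial.natDegree_le_of_dvd hXdvd hμ0
      rw [Polynomial.natDegree_X_pow] at hle
      exact le_trans hle hμdeg
    exact hassoc.dvd.trans (pow_dvd_pow _ hideg)
  -- μ₂ divides X ^ L - 1
  have hsf : Squarefree ((X : ℚ[X]) ^ e - 1) := by
    have hsep : ((X : ℚ[X]) ^ e - C 1).Separable :=
      Polynomial.separable_X_pow_sub_C (1 : ℚ) (by exact_mod_cast he0.ne') one_ne_zero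
    rw [map_one] at hsep
    exact hsep.squarefree
  have hμ₂ : μ₂ ∣ (X : ℚ[X]) ^ L - 1 := by
    apply squarefree_dvd_of_forall_prime_dvd _ (hsf.squarefree_of_dvd h₂)
    intro π hπ hπμ₂
    have hπe : π ∣ (X : ℚ[X]) ^ e - 1 := hπμ₂.trans h₂
    rw [← prod_cyclotomic_eq_X_pow_sub_one he0 ℚ] at hπe
    obtain ⟨n, hn, hπn⟩ := hπ.exists_mem_finset_dvd hπe
    have hn0 : 0 < n := Nat.pos_of_mem_divisors hn
    have hassoc : Associated π (cyclotomic n ℚ) :=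
      hπ.irreducible.associated_of_dvd (cyclotomic.irreducible_rat hn0) hπn
    have hcycμ : cyclotomic n ℚ ∣ μ :=
      hassoc.symm.dvd.trans (hπμ₂.trans (hμeq ▸ dvd_mul_left μ₂ μ₁))
    have htotle : n.totient ≤ d := by
      have hle := Polynomial.natDegree_le_of_dvd hcycμ hμ0
      rw [Polynomial.natDegree_cyclotomic] at hle
      exact le_trans hle hμdeg
    have hnL : n ∣ L := dvd_factorial_of_totient_le hd hn0 htotle
    refine hπn.trans ((cyclotomic.dvd_X_pow_sub_one n ℚ).trans ?_)
    obtain ⟨m, hm⟩ := hnL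
    have hdvdpow : ((X : ℚ[X]) ^ n - 1) ∣ ((X : ℚ[X]) ^ n) ^ m - 1 ^ m :=
      sub_dvd_pow_sub_pow _ _ m
    rw [one_pow, ← pow_mul, ← hm] at hdvdpow
    exact hdvdpow
  -- conclude
  have hfinal : μ ∣ (X : ℚ[X]) ^ (L + d) - X ^ d := by
    have heq : (X : ℚ[X]) ^ (L + d) - X ^ d = X ^ d * (X ^ L - 1) := by
      rw [mul_sub, mul_one, ← pow_add, add_comm]
    rw [heq, hμeq]
    exact mul_dvd_mul hμ₁ hμ₂
  obtain ⟨g, hg⟩ := hfinal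
  have haev : M ^ (L + d) - M ^ d = 0 := by
    have := congrArg (aeval M) hg
    rwa [map_sub, aeval_X_pow, aeval_X_pow, map_mul, minpoly.aeval, zero_mul] at this
  rw [sub_eq_zero] at haev
  exact haev
end

section
/- For every positive integer n, the product ∏_{j=1}^n γ_j(z) of the first n cyclotomic polynomials equals ν_n(z) / gcd(ν_n'(z), ν_n(z)), where ν_n(z) = ∏_{j=1}^n (z^j - 1). -/
open Polynomial Finset

private lemma cyc_not_dvd {c d : ℕ} (hc : 0 < c) (hd : 0 < d) (hne : c ≠ d) :
    ¬ Polynomial.cyclotomic c ℚ ∣ Polynomial.cyclotomic d ℚ := by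
  intro h
  have heq : Polynomial.cyclotomic c ℚ = Polynomial.cyclotomic d ℚ :=
    Polynomial.eq_of_monic_of_associated (cyclotomic.monic c ℚ) (cyclotomic.monic d ℚ)
      ((cyclotomic.irreducible_rat hc).associated_of_dvd (cyclotomic.irreducible_rat hd) h)
  exact hne (Polynomial.cyclotomic_injective (R := ℚ) heq)

private lemma nu_eq (n : ℕ) :
    (∏ j ∈ Finset.Icc 1 n, ((Polynomial.X : Polynomial ℚ) ^ j - 1)) =
      ∏ d ∈ Finset.Icc 1 n, Polynomial.cyclotomic d ℚ ^ (n / d) := by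
  calc (∏ j ∈ Finset.Icc 1 n, ((Polynomial.X : Polynomial ℚ) ^ j - 1))
      = ∏ j ∈ Finset.Icc 1 n, ∏ d ∈ (Finset.Icc 1 n).filter (· ∣ j),
          Polynomial.cyclotomic d ℚ := ?_
    _ = ∏ d ∈ Finset.Icc 1 n, ∏ j ∈ (Finset.Icc 1 n).filter (d ∣ ·),
          Polynomial.cyclotomic d ℚ := ?_
    _ = ∏ d ∈ Finset.Icc 1 n, Polynomial.cyclotomic d ℚ ^ (n / d) := ?_
  · refine Finset.prod_congr rfl fun j hj => ?_
    rw [Finset.mem_Icc] at hj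
    rw [← Polynomial.prod_cyclotomic_eq_X_pow_sub_one (show 0 < j by omega) ℚ]
    congr 1
    ext d
    simp only [Nat.mem_divisors, Finset.mem_filter, Finset.mem_Icc]
    constructor
    · rintro ⟨hdj, hj0⟩
      exact ⟨⟨Nat.pos_of_dvd_of_pos hdj (by omega),
        le_trans (Nat.le_of_dvd (by omega) hdj) hj.2⟩, hdj⟩
    · rintro ⟨_, hdj⟩; exact ⟨hdj, by omega⟩
  · refine Finset.prod_comm' ?_
    intro x y
    simp only [Finset.mem_filter]
    tauto
  · refine Finset.prod_congr rfl fun d _ => ?_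
    rw [Finset.prod_const]
    congr 1
    have hicc : Finset.Icc 1 n = Finset.Ioc 0 n := by ext x; simp; omega
    rw [hicc]
    exact Nat.Ioc_filter_dvd_card_eq_div n d

private lemma dvd_derivative_prod {s : Finset ℕ} {F G : ℕ → Polynomial ℚ}
    (h1 : ∀ i ∈ s, G i ∣ F i) (h2 : ∀ i ∈ s, G i ∣ Polynomial.derivative (F i)) :
    (∏ i ∈ s, G i) ∣ Polynomial.derivative (∏ i ∈ s, F i) := by
  classical
  induction s using Finset.induction_on with
  | empty => simp
  | @insert a s ha ih =>
    rw [Finset.prod_insert ha, Finset.prod_insert ha, Polynomial.derivative_mul]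
    refine dvd_add ?_ ?_
    · exact mul_dvd_mul (h2 a (Finset.mem_insert_self a s))
        (Finset.prod_dvd_prod_of_dvd _ _ fun i hi => h1 i (Finset.mem_insert_of_mem hi))
    · exact mul_dvd_mul (h1 a (Finset.mem_insert_self a s))
        (ih (fun i hi => h1 i (Finset.mem_insert_of_mem hi))
          (fun i hi => h2 i (Finset.mem_insert_of_mem hi)))

theorem prod_cyclotomic_eq_div_gcd (n : ℕ) (hn : 0 < n) :
    (∏ j ∈ Finset.Icc 1 n, Polynomial.cyclotomic j ℚ) =
      (∏ j ∈ Finset.Icc 1 n, ((Polynomial.X : Polynomial ℚ) ^ j - 1)) /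
        gcd (Polynomial.derivative (∏ j ∈ Finset.Icc 1 n, ((Polynomial.X : Polynomial ℚ) ^ j - 1)))
          (∏ j ∈ Finset.Icc 1 n, ((Polynomial.X : Polynomial ℚ) ^ j - 1)) := by
  classical
  set s := Finset.Icc 1 n with hs
  set f : ℚ[X] := ∏ j ∈ s, ((X : ℚ[X]) ^ j - 1) with hf
  set r : ℚ[X] := ∏ d ∈ s, cyclotomic d ℚ with hr
  set g : ℚ[X] := ∏ d ∈ s, cyclotomic d ℚ ^ (n / d - 1) with hg
  have hposd : ∀ d ∈ s, 0 < d := fun d hd => by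
    rw [hs, Finset.mem_Icc] at hd; omega
  have hdivd : ∀ d ∈ s, 1 ≤ n / d := fun d hd => by
    rw [hs, Finset.mem_Icc] at hd
    exact (Nat.one_le_div_iff (by omega)).mpr hd.2
  have hprime : ∀ d ∈ s, Prime (cyclotomic d ℚ) := fun d hd =>
    UniqueFactorizationMonoid.irreducible_iff_prime.mp
      (cyclotomic.irreducible_rat (hposd d hd))
  have hfe : f = ∏ d ∈ s, cyclotomic d ℚ ^ (n / d) := nu_eq n
  have hfgr : f = g * r := by
    rw [hfe, hg, hr, ← Finset.prod_mul_distrib]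
    refine Finset.prod_congr rfl fun d hd => ?_
    rw [← pow_succ]
    congr 1
    have := hdivd d hd
    omega
  have hg_monic : g.Monic :=
    monic_prod_of_monic _ _ fun d _ => (cyclotomic.monic d ℚ).pow _
  have hr_monic : r.Monic :=
    monic_prod_of_monic _ _ fun d _ => cyclotomic.monic d ℚ
  have hg0 : g ≠ 0 := hg_monic.ne_zero
  have hr0 : r ≠ 0 := hr_monic.ne_zero
  -- g divides the derivative of f
  have hgf' : g ∣ derivative f := by
    rw [hfe, hg]
    refine dvd_derivative_prod (fun d _ => pow_dvd_pow _ (Nat.sub_le _ _)) fun d _ => ?_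
    rw [derivative_pow]
    exact dvd_mul_of_dvd_left (dvd_mul_left _ _) _
  have hgG : g ∣ gcd (derivative f) f :=
    dvd_gcd hgf' (hfgr ▸ Dvd.intro r rfl)
  obtain ⟨h, hGh⟩ := hgG
  have hhr : h ∣ r := by
    have h1 : g * h ∣ g * r := by
      rw [← hGh, ← hfgr]; exact gcd_dvd_right _ _
    exact (mul_dvd_mul_iff_left hg0).mp h1
  have hh0 : h ≠ 0 := by
    rintro rfl
    exact hr0 (zero_dvd_iff.mp hhr)
  have hunit : IsUnit h := by
    by_contra hnu
    obtain ⟨p, hp_irr, hph⟩ := WfDvdMonoid.exists_irreducible_factor hnu hh0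
    have hp_prime : Prime p := UniqueFactorizationMonoid.irreducible_iff_prime.mp hp_irr
    obtain ⟨c, hcs, hpc⟩ := hp_prime.exists_mem_finset_dvd (hph.trans hhr)
    have hΦh : cyclotomic c ℚ ∣ h :=
      ((hp_irr.associated_of_dvd (cyclotomic.irreducible_rat (hposd c hcs)) hpc).symm.dvd).trans hph
    -- then cyclotomic c ^ (n/c) divides derivative f
    have hec : 1 ≤ n / c := hdivd c hcs
    have hΦ0 : cyclotomic c ℚ ≠ 0 := (cyclotomic.monic c ℚ).ne_zero
    have hpow : cyclotomic c ℚ ^ (n / c) ∣ derivative f := by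
      have h1 : cyclotomic c ℚ ^ (n / c - 1) * cyclotomic c ℚ ∣ g * h :=
        mul_dvd_mul (Finset.dvd_prod_of_mem _ hcs) hΦh
      rw [← pow_succ] at h1
      have h2 : (n / c - 1 + 1) = n / c := by omega
      rw [h2] at h1
      exact h1.trans (hGh ▸ gcd_dvd_left _ _)
    -- derive a contradiction
    set u : ℚ[X] := ∏ d ∈ s.erase c, cyclotomic d ℚ ^ (n / d) with hu
    have hfu : f = cyclotomic c ℚ ^ (n / c) * u := by
      rw [hfe, hu, Finset.mul_prod_erase s (fun d => cyclotomic d ℚ ^ (n / d)) hcs]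
    have hder : derivative f =
        (Polynomial.C ((n / c : ℕ) : ℚ) * cyclotomic c ℚ ^ (n / c - 1) *
          derivative (cyclotomic c ℚ)) * u +
        cyclotomic c ℚ ^ (n / c) * derivative u := by
      rw [hfu, derivative_mul, derivative_pow]
    have hdvd2 : cyclotomic c ℚ ^ (n / c) ∣
        (Polynomial.C ((n / c : ℕ) : ℚ) * cyclotomic c ℚ ^ (n / c - 1) *
          derivative (cyclotomic c ℚ)) * u := by
      have := (dvd_sub hpow (Dvd.intro _ rfl : cyclotomic c ℚ ^ (n / c) ∣
        cyclotomic c ℚ ^ (n / c) * derivative u))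
      rw [hder] at this
      simpa using this
    have key : cyclotomic c ℚ ∣
        Polynomial.C ((n / c : ℕ) : ℚ) * derivative (cyclotomic c ℚ) * u := by
      have h3 : cyclotomic c ℚ ^ (n / c - 1) * cyclotomic c ℚ ∣
          cyclotomic c ℚ ^ (n / c - 1) *
            (Polynomial.C ((n / c : ℕ) : ℚ) * derivative (cyclotomic c ℚ) * u) := by
        rw [← pow_succ]
        have h2 : (n / c - 1 + 1) = n / c := by omega
        rw [h2]
        calc cyclotomic c ℚ ^ (n / c) ∣
            (Polynomial.C ((n / c : ℕ) : ℚ) * cyclotomic c ℚ ^ (n / c - 1) *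
              derivative (cyclotomic c ℚ)) * u := hdvd2
          _ = cyclotomic c ℚ ^ (n / c - 1) *
              (Polynomial.C ((n / c : ℕ) : ℚ) * derivative (cyclotomic c ℚ) * u) := by ring
      exact (mul_dvd_mul_iff_left (pow_ne_zero _ hΦ0)).mp h3
    have hcprime := hprime c hcs
    rcases hcprime.dvd_or_dvd key with hk | hk
    · -- cyclotomic c ∣ C e * derivative (cyclotomic c): degree contradiction
      have hdeg1 : 0 < (cyclotomic c ℚ).natDegree := by
        rw [natDegree_cyclotomic]
        exact Nat.totient_pos.mpr (hposd c hcs)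
      have hd0 : derivative (cyclotomic c ℚ) ≠ 0 := by
        intro hzero
        have := Polynomial.degree_derivative_eq (cyclotomic c ℚ) hdeg1
        rw [hzero, Polynomial.degree_zero] at this
        exact (by simp at this)
      have hC0 : (Polynomial.C ((n / c : ℕ) : ℚ)) ≠ 0 := by
        simp only [ne_eq, Polynomial.C_eq_zero, Nat.cast_eq_zero]
        omega
      have hne0 : Polynomial.C ((n / c : ℕ) : ℚ) * derivative (cyclotomic c ℚ) ≠ 0 :=
        mul_ne_zero hC0 hd0
      have hlt : (Polynomial.C ((n / c : ℕ) : ℚ) * derivative (cyclotomic c ℚ)).degree <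
          (cyclotomic c ℚ).degree := by
        rw [Polynomial.degree_C_mul (by exact_mod_cast (by omega : (n / c : ℕ) ≠ 0) ∘
          Nat.cast_injective.eq_iff.mp)]
        exact Polynomial.degree_derivative_lt hΦ0
      exact hne0 (Polynomial.eq_zero_of_dvd_of_degree_lt hk hlt)
    · -- cyclotomic c ∣ u: coprimality contradiction
      obtain ⟨d, hds, hdd⟩ := hcprime.exists_mem_finset_dvd hk
      have hdne : d ≠ c := (Finset.mem_erase.mp hds).1
      have hds' : d ∈ s := (Finset.mem_erase.mp hds).2
      exact cyc_not_dvd (hposd c hcs) (hposd d hds') (fun e => hdne e.symm)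
        (hcprime.dvd_of_dvd_pow hdd)
  have hG : gcd (derivative f) f = g := by
    rw [← _root_.normalize_gcd, hGh, normalize_mul, hg_monic.normalize_eq_self,
      normalize_eq_one.mpr hunit, mul_one]
  show r = f / gcd (derivative f) f
  rw [hG, hfgr, mul_div_cancel_left₀ _ hg0]
end

section
/- Let M be a d×d matrix over ℚ and define the (d+2)×(d+2) block matrices A = diag(M^d, N) and B = diag(M^d, O), where N = [[0,1],[0,0]] and O is the 2×2 zero matrix. Then there exists a natural number n with A^n = B if and only if M is torsion (i.e., M^p = M^q for some distinct naturals p, q). -/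
open Matrix

-- kernel stabilization: endomorphism version of periodicity pushdown
lemma end_pow_eq (d k : ℕ) (f : Module.End ℚ (Fin d → ℚ)) (p : ℕ)
    (h : f ^ (p + k) = f ^ p) : f ^ (d + k) = f ^ d := by
  apply LinearMap.ext; intro x
  have h1 : (f ^ k) x - x ∈ LinearMap.ker (f ^ p) := by
    simp only [LinearMap.mem_ker, map_sub, ← Module.End.mul_apply, ← pow_add]
    rw [h, sub_self]
  have h2 : (f ^ k) x - x ∈ LinearMap.ker (f ^ d) := by
    have := Module.End.ker_pow_le_ker_pow_finrank f p h1
    simpa using this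
  have := LinearMap.mem_ker.mp h2
  calc (f ^ (d + k)) x = (f ^ d) ((f ^ k) x) := by rw [pow_add]; rfl
    _ = (f ^ d) x := by rw [← sub_eq_zero, ← map_sub, this]

lemma mat_pow_eq (d k : ℕ) (M : Matrix (Fin d) (Fin d) ℚ) (p : ℕ)
    (h : M ^ (p + k) = M ^ p) : M ^ (d + k) = M ^ d := by
  apply Matrix.toLinAlgEquiv'.injective
  simpa only [map_pow] using end_pow_eq d k (Matrix.toLinAlgEquiv' M) p (by
    simpa only [map_pow] using congrArg Matrix.toLinAlgEquiv' h)

lemma blocks_pow {m n : Type*} [Fintype m] [Fintype n] [DecidableEq m] [DecidableEq n]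
    (A : Matrix m m ℚ) (B : Matrix n n ℚ) (j : ℕ) :
    (Matrix.fromBlocks A 0 0 B) ^ j = Matrix.fromBlocks (A ^ j) 0 0 (B ^ j) := by
  induction j with
  | zero => simp [Matrix.fromBlocks_one]
  | succ j ih => rw [pow_succ, pow_succ, pow_succ, ih, Matrix.fromBlocks_multiply]; simp

theorem mtp_reduces_to_mpp (d : ℕ) (M : Matrix (Fin d) (Fin d) ℚ) :
    (∃ n : ℕ,
        (Matrix.fromBlocks (M ^ d) 0 0 (!![0, 1; 0, 0] : Matrix (Fin 2) (Fin 2) ℚ)) ^ n =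
          Matrix.fromBlocks (M ^ d) 0 0 (0 : Matrix (Fin 2) (Fin 2) ℚ)) ↔
      (∃ p q : ℕ, p ≠ q ∧ M ^ p = M ^ q) := by
  constructor
  · rintro ⟨n, hn⟩
    rw [blocks_pow] at hn
    have hN : (!![0, 1; 0, 0] : Matrix (Fin 2) (Fin 2) ℚ) ^ n = 0 := by
      have := congrArg Matrix.toBlocks₂₂ hn
      simpa using this
    have hM : (M ^ d) ^ n = M ^ d := by
      have := congrArg Matrix.toBlocks₁₁ hn
      simpa using this
    rcases Nat.eq_zero_or_pos d with rfl | hd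
    · exact ⟨0, 1, by norm_num, Subsingleton.elim _ _⟩
    · have hn2 : 2 ≤ n := by
        by_contra hlt
        interval_cases n
        · rw [pow_zero] at hN
          have := congrFun (congrFun hN 0) 0
          norm_num at this
        · rw [pow_one] at hN
          have := congrFun (congrFun hN 0) 1
          norm_num at this
      refine ⟨d * n, d, ?_, by rw [pow_mul]; exact hM⟩
      have : d < d * n := by
        nlinarith
      omega
  · rintro ⟨p, q, hpq, h⟩
    wlog hlt : p < q generalizing p q
    · exact this q p hpq.symm h.symm (by omega)
    set k := q - p with hk
    have hk1 : 1 ≤ k := by omega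
    have hper : M ^ (p + k) = M ^ p := by rw [hk]; rw [show p + (q - p) = q by omega]; exact h.symm
    have key : M ^ (d + k) = M ^ d := mat_pow_eq d k M p hper
    have keym : ∀ m : ℕ, M ^ (d + m * k) = M ^ d := by
      intro m
      induction m with
      | zero => simp
      | succ m ih =>
        have : d + (m + 1) * k = (d + m * k) + k := by ring
        rw [this, pow_add, ih, ← pow_add, key]
    refine ⟨k + 1, ?_⟩
    have hMn : (M ^ d) ^ (k + 1) = M ^ d := by
      rw [← pow_mul, show d * (k + 1) = d + d * k by ring, keym d]
    have hNn : (!![0, 1; 0, 0] : Matrix (Fin 2) (Fin 2) ℚ) ^ (k + 1) = 0 := by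
      rw [show k + 1 = 2 + (k - 1) by omega, pow_add]
      have h2 : (!![0, 1; 0, 0] : Matrix (Fin 2) (Fin 2) ℚ) ^ 2 = 0 := by
        rw [pow_two]
        ext i j
        fin_cases i <;> fin_cases j <;> simp [Matrix.mul_apply, Fin.sum_univ_two]
      rw [h2, zero_mul]
    rw [blocks_pow, hMn, hNn]
end
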